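/- Let A be an n×n Hermitian positive definite matrix, r₀ ∈ ℂⁿ nonzero, and m ≥ 1. Let r_m be the GMRES residual after m steps, i.e., r_m = r₀ − A Δf where Δf minimizes ‖r₀ − A Δf‖ over the Krylov subspace span{r₀, A r₀, …, A^{m−1} r₀}. Then ‖r_m‖² = ‖r₀‖² − ‖A Δf*‖², where Δf* is the minimizer, and the ratio ‖r_m‖²/‖r₀‖² ≤ 1 − ε_m with ε_m = Σ_{j=1}^m |r̄₀^H A^j r̄₀|² / tr(K̄^H K̄) > 0, where r̄₀ = r₀/‖r₀‖ and K̄ = [A r̄₀, …, A^m r̄₀]. Hence restarted GMRES with any restart length m ≥ 1 strictly reduces the residual norm at each restart cycle. -/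

import Mathlib

open Matrix ComplexOrder
open scoped InnerProductSpace

/-- Euclidean norm of a complex vector. -/
noncomputable def enorm' {n : ℕ} (x : Fin n → ℂ) : ℝ :=
  Real.sqrt (∑ i, ‖x i‖ ^ 2)

noncomputable def iE {n : ℕ} : (Fin n → ℂ) ≃ₗ[ℂ] EuclideanSpace ℂ (Fin n) :=
  (WithLp.linearEquiv 2 ℂ (Fin n → ℂ)).symm

lemma enorm_eq {n : ℕ} (x : Fin n → ℂ) : enorm' x = ‖iE x‖ := by
  rw [enorm', EuclideanSpace.norm_eq]
  rfl

lemma inner_iE {n : ℕ} (x y : Fin n → ℂ) : ⟪iE x, iE y⟫_ℂ = star x ⬝ᵥ y := by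
  rw [dotProduct_comm]; rfl

lemma opt_inner_zero {E : Type*} [NormedAddCommGroup E] [InnerProductSpace ℂ E]
    (K : Submodule ℂ E) {u v : E} (hv : v ∈ K)
    (hopt : ∀ g ∈ K, ‖u - v‖ ≤ ‖u - g‖) : ∀ w ∈ K, ⟪u - v, w⟫_ℂ = 0 := by
  rw [← K.norm_eq_iInf_iff_inner_eq_zero hv]
  refine le_antisymm (le_ciInf fun w => hopt w w.2) ?_
  have hbdd : BddBelow (Set.range fun w : K => ‖u - (w : E)‖) := by
    refine ⟨0, ?_⟩
    rintro x ⟨w, rfl⟩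
    exact norm_nonneg _
  exact ciInf_le hbdd ⟨v, hv⟩

set_option maxHeartbeats 1000000 in
/-- For A Hermitian positive definite, r₀ ≠ 0 and m ≥ 1, the GMRES residual
r_m = r₀ − A Δf* after one restart cycle of length m satisfies
‖r_m‖² = ‖r₀‖² − ‖A Δf*‖², and ‖r_m‖²/‖r₀‖² ≤ 1 − ε_m with
ε_m = Σ_{j=1}^m |r̄₀ᴴ Aʲ r̄₀|² / tr(K̄ᴴK̄) > 0; hence the residual norm strictly
decreases at each restart cycle. -/
theorem restarted_gmres_decrease {n : ℕ} (A : Matrix (Fin n) (Fin n) ℂ)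
    (hA : A.PosDef) (r₀ : Fin n → ℂ) (hr₀ : r₀ ≠ 0) (m : ℕ) (hm : 1 ≤ m)
    (Δf : Fin n → ℂ)
    (hmem : Δf ∈ Submodule.span ℂ (Set.range fun i : Fin m => (A ^ (i : ℕ)) *ᵥ r₀))
    (hopt : ∀ g ∈ Submodule.span ℂ (Set.range fun i : Fin m => (A ^ (i : ℕ)) *ᵥ r₀),
      enorm' (r₀ - A *ᵥ Δf) ≤ enorm' (r₀ - A *ᵥ g)) :
    (enorm' (r₀ - A *ᵥ Δf)) ^ 2 = (enorm' r₀) ^ 2 - (enorm' (A *ᵥ Δf)) ^ 2 ∧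
    (0 < (∑ j ∈ Finset.Icc 1 m,
          ‖star (((enorm' r₀ : ℂ))⁻¹ • r₀) ⬝ᵥ
            (A ^ j) *ᵥ (((enorm' r₀ : ℂ))⁻¹ • r₀)‖ ^ 2) /
        (∑ j ∈ Finset.Icc 1 m, (enorm' ((A ^ j) *ᵥ (((enorm' r₀ : ℂ))⁻¹ • r₀))) ^ 2)) ∧
    ((enorm' (r₀ - A *ᵥ Δf)) ^ 2 / (enorm' r₀) ^ 2 ≤
      1 - (∑ j ∈ Finset.Icc 1 m,
          ‖star (((enorm' r₀ : ℂ))⁻¹ • r₀) ⬝ᵥ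
            (A ^ j) *ᵥ (((enorm' r₀ : ℂ))⁻¹ • r₀)‖ ^ 2) /
        (∑ j ∈ Finset.Icc 1 m, (enorm' ((A ^ j) *ᵥ (((enorm' r₀ : ℂ))⁻¹ • r₀))) ^ 2)) ∧
    enorm' (r₀ - A *ᵥ Δf) < enorm' r₀ := by
  classical
  have hc_pos : 0 < enorm' r₀ := by
    rw [enorm_eq, norm_pos_iff]
    exact iE.map_ne_zero_iff.mpr hr₀
  set c : ℝ := enorm' r₀ with hc_def
  have hcC : (c : ℂ) ≠ 0 := by exact_mod_cast hc_pos.ne'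
  set rb : Fin n → ℂ := ((c : ℂ))⁻¹ • r₀ with hrb_def
  have hrb_ne : rb ≠ 0 := by
    simp only [hrb_def, ne_eq, smul_eq_zero, inv_eq_zero, hcC, false_or]
    exact hr₀
  have hr₀_eq : r₀ = (c : ℂ) • rb := by
    rw [hrb_def, smul_smul, mul_inv_cancel₀ hcC, one_smul]
  set d : Fin n → ℂ := A *ᵥ Δf with hd_def
  -- the subspaces
  set S : Set (Fin n → ℂ) := Set.range fun i : Fin m => (A ^ (i : ℕ)) *ᵥ r₀ with hS_def
  set W0 : Submodule ℂ (Fin n → ℂ) := Submodule.map A.mulVecLin (Submodule.span ℂ S)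
    with hW0_def
  have hdW0 : d ∈ W0 := ⟨Δf, hmem, rfl⟩
  have hoptW : ∀ w ∈ W0, enorm' (r₀ - d) ≤ enorm' (r₀ - w) := by
    rintro w ⟨g, hg, rfl⟩
    exact hopt g hg
  set K : Submodule ℂ (EuclideanSpace ℂ (Fin n)) := W0.map iE.toLinearMap with hK_def
  have hdK : iE d ∈ K := ⟨d, hdW0, rfl⟩
  have hoptK : ∀ w ∈ K, ‖iE r₀ - iE d‖ ≤ ‖iE r₀ - w‖ := by
    rintro w ⟨w', hw', rfl⟩
    have he : (iE.toLinearMap w' : EuclideanSpace ℂ (Fin n)) = iE w' := rfl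
    rw [he, ← map_sub, ← map_sub, ← enorm_eq, ← enorm_eq]
    exact hoptW w' hw'
  have hperp : ∀ w ∈ K, ⟪iE r₀ - iE d, w⟫_ℂ = 0 := opt_inner_zero K hdK hoptK
  -- Part 1: Pythagoras
  have hpyth : ‖iE r₀ - iE d‖ ^ 2 = ‖iE r₀‖ ^ 2 - ‖iE d‖ ^ 2 := by
    have h0 : ⟪iE r₀ - iE d, iE d⟫_ℂ = 0 := hperp _ hdK
    have hns := norm_add_sq (𝕜 := ℂ) (iE r₀ - iE d) (iE d)
    rw [sub_add_cancel, h0] at hns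
    simp only [map_zero, mul_zero, zero_mul, add_zero] at hns
    linarith
  have part1 : (enorm' (r₀ - d)) ^ 2 = (enorm' r₀) ^ 2 - (enorm' d) ^ 2 := by
    rw [enorm_eq (r₀ - d), enorm_eq r₀, enorm_eq d, map_sub]
    exact hpyth
  -- Krylov vectors
  set w : ℕ → (Fin n → ℂ) := fun j => (A ^ j) *ᵥ rb with hw_def
  set α : ℕ → ℂ := fun j => star rb ⬝ᵥ w j with hα_def
  set N : ℝ := ∑ j ∈ Finset.Icc 1 m, ‖α j‖ ^ 2 with hN_def
  set D : ℝ := ∑ j ∈ Finset.Icc 1 m, (enorm' (w j)) ^ 2 with hD_def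
  have hwK : ∀ j ∈ Finset.Icc 1 m, iE (w j) ∈ K := by
    intro j hj
    rw [Finset.mem_Icc] at hj
    obtain ⟨hj1, hj2⟩ := hj
    refine ⟨w j, ?_, rfl⟩
    have hjs : j - 1 + 1 = j := Nat.succ_pred_eq_of_pos hj1
    have hmemS : (A ^ (j - 1)) *ᵥ r₀ ∈ S := ⟨⟨j - 1, by omega⟩, rfl⟩
    have hAj : (A ^ j) *ᵥ r₀ = A.mulVecLin ((A ^ (j - 1)) *ᵥ r₀) := by
      rw [mulVecLin_apply, mulVec_mulVec, ← pow_succ', hjs]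
    have h1 : (A ^ j) *ᵥ r₀ ∈ W0 := by
      rw [hAj]
      exact ⟨_, Submodule.subset_span hmemS, rfl⟩
    have hwj : w j = ((c : ℂ))⁻¹ • ((A ^ j) *ᵥ r₀) := by
      rw [hw_def]
      simp [hrb_def, mulVec_smul]
    rw [hwj]
    exact W0.smul_mem _ h1
  -- positivity of N and D
  have hα1_pos : 0 < α 1 := by
    have := hA.dotProduct_mulVec_pos hrb_ne
    simpa [hα_def, hw_def] using this
  have hα1_ne : α 1 ≠ 0 := hα1_pos.ne'
  have h1mem : (1 : ℕ) ∈ Finset.Icc 1 m := by simp [hm]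
  have hN_pos : 0 < N := by
    rw [hN_def]
    apply Finset.sum_pos' (fun j _ => sq_nonneg _)
    refine ⟨1, h1mem, ?_⟩
    have h1 : ‖α 1‖ ≠ 0 := by simpa using hα1_ne
    exact pow_pos ((norm_nonneg _).lt_of_ne (Ne.symm h1)) 2
  have hw1_ne : w 1 ≠ 0 := by
    intro h
    apply hα1_ne
    rw [hα_def]
    simp [h]
  have hD_pos : 0 < D := by
    rw [hD_def]
    apply Finset.sum_pos' (fun j _ => sq_nonneg _)
    refine ⟨1, h1mem, ?_⟩
    have h1 : enorm' (w 1) ≠ 0 := by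
      rw [enorm_eq, norm_ne_zero_iff]
      exact iE.map_ne_zero_iff.mpr hw1_ne
    have h2 : 0 ≤ enorm' (w 1) := by rw [enorm_eq]; exact norm_nonneg _
    exact pow_pos (lt_of_le_of_ne h2 (Ne.symm h1)) 2
  have part2 : 0 < N / D := div_pos hN_pos hD_pos
  -- the test vector
  set v : EuclideanSpace ℂ (Fin n) :=
    ∑ j ∈ Finset.Icc 1 m, (starRingEnd ℂ (α j)) • iE (w j) with hv_def
  have hvK : v ∈ K := Submodule.sum_mem K fun j hj => K.smul_mem _ (hwK j hj)
  have hinner_rb_v : ⟪iE rb, v⟫_ℂ = (N : ℂ) := by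
    rw [hv_def, inner_sum, hN_def]
    push_cast
    apply Finset.sum_congr rfl
    intro j _
    rw [inner_smul_right, inner_iE]
    show (starRingEnd ℂ) (α j) * α j = _
    rw [mul_comm, Complex.mul_conj, ← Complex.sq_norm]
    push_cast
    ring
  have hnorm_v_sq : ‖v‖ ^ 2 ≤ N * D := by
    have h1 : ‖v‖ ≤ ∑ j ∈ Finset.Icc 1 m, ‖α j‖ * enorm' (w j) := by
      rw [hv_def]
      refine (norm_sum_le _ _).trans ?_
      apply Finset.sum_le_sum
      intro j _
      rw [norm_smul, enorm_eq]
      simp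
    have h2 := Finset.sum_mul_sq_le_sq_mul_sq (Finset.Icc 1 m)
      (fun j => ‖α j‖) (fun j => enorm' (w j))
    calc ‖v‖ ^ 2 ≤ (∑ j ∈ Finset.Icc 1 m, ‖α j‖ * enorm' (w j)) ^ 2 := by
          apply pow_le_pow_left₀ (norm_nonneg _) h1
      _ ≤ N * D := by rw [hN_def, hD_def]; exact h2
  -- key inequality
  have hinner_r0_v : ⟪iE r₀, v⟫_ℂ = ((c * N : ℝ) : ℂ) := by
    rw [hr₀_eq, _root_.map_smul, inner_smul_left, hinner_rb_v]
    push_cast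
    rw [Complex.conj_ofReal]
  have hkey : c * N ≤ ‖iE d‖ * ‖v‖ := by
    have h0 : ⟪iE r₀ - iE d, v⟫_ℂ = 0 := hperp v hvK
    rw [inner_sub_left, sub_eq_zero] at h0
    have hle : ‖⟪iE r₀, v⟫_ℂ‖ ≤ ‖iE d‖ * ‖v‖ := by
      rw [h0]; exact norm_inner_le_norm (iE d) v
    rw [hinner_r0_v] at hle
    rw [Complex.norm_real, Real.norm_eq_abs] at hle
    have hcn : (0:ℝ) ≤ c * N := mul_nonneg hc_pos.le hN_pos.le
    rwa [abs_of_nonneg hcn] at hle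
  have hdsq : c ^ 2 * N ≤ ‖iE d‖ ^ 2 * D := by
    have hsq : (c * N) ^ 2 ≤ (‖iE d‖ * ‖v‖) ^ 2 :=
      pow_le_pow_left₀ (mul_nonneg hc_pos.le hN_pos.le) hkey 2
    have h3 : (‖iE d‖ * ‖v‖) ^ 2 ≤ ‖iE d‖ ^ 2 * (N * D) := by
      rw [mul_pow]
      exact mul_le_mul_of_nonneg_left hnorm_v_sq (sq_nonneg _)
    nlinarith [hN_pos]
  -- assemble
  have hed : enorm' d = ‖iE d‖ := enorm_eq d
  have hND : N / D ≤ (enorm' d) ^ 2 / c ^ 2 := by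
    rw [hed, div_le_div_iff₀ hD_pos (pow_pos hc_pos 2)]
    linarith [hdsq]
  have part3 : (enorm' (r₀ - d)) ^ 2 / c ^ 2 ≤ 1 - N / D := by
    rw [part1, ← hc_def, sub_div, div_self (pow_pos hc_pos 2).ne']
    linarith [hND]
  have part4 : enorm' (r₀ - d) < enorm' r₀ := by
    have hd_pos : 0 < (enorm' d) ^ 2 := by
      have h1 : 0 < c ^ 2 * N := mul_pos (pow_pos hc_pos 2) hN_pos
      have h2 : 0 < ‖iE d‖ ^ 2 * D := lt_of_lt_of_le h1 hdsq
      rw [hed]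
      nlinarith [hD_pos]
    have hlt : (enorm' (r₀ - d)) ^ 2 < (enorm' r₀) ^ 2 := by
      rw [part1]
      nlinarith [hd_pos]
    have hnn : 0 ≤ enorm' r₀ := by rw [enorm_eq]; exact norm_nonneg _
    exact lt_of_pow_lt_pow_left₀ 2 hnn hlt
  exact ⟨part1, part2, part3, part4⟩
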